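/- Let ε > 0 and let Z be a real-valued random variable on a probability space such that e^{−ε} ≤ Z ≤ e^{ε} almost surely and E[Z] = 1. Then E[Z log Z] ≤ ε · (e^ε − 1)(1 − e^{−ε}) / (e^ε − e^{−ε}); the bound is attained by the two-point variable taking the value e^{ε} with probability p = (1 − e^{−ε})/(e^ε − e^{−ε}) and e^{−ε} with probability 1 − p. -/

import Mathlib

open MeasureTheory Real

/-- If `Z` is a real random variable on a probability space with
`e^{-ε} ≤ Z ≤ e^ε` a.s. and `E[Z] = 1` (for `ε > 0`), then
`E[Z log Z] ≤ ε (e^ε - 1)(1 - e^{-ε}) / (e^ε - e^{-ε})`, and the bound is attained by the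
two-point variable taking the value `e^ε` with probability `p = (1 - e^{-ε})/(e^ε - e^{-ε})`
and `e^{-ε}` with probability `1 - p`. -/
theorem z_log_z_bound
    {Ω : Type*} [MeasurableSpace Ω] (μ : Measure Ω) [IsProbabilityMeasure μ]
    (ε : ℝ) (hε : 0 < ε) (Z : Ω → ℝ) (hZ : Measurable Z)
    (hrange : ∀ᵐ x ∂μ, Real.exp (-ε) ≤ Z x ∧ Z x ≤ Real.exp ε)
    (hmean : ∫ x, Z x ∂μ = 1) :
    (∫ x, Z x * Real.log (Z x) ∂μ
        ≤ ε * ((Real.exp ε - 1) * (1 - Real.exp (-ε))) / (Real.exp ε - Real.exp (-ε)))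
    ∧ ((1 - Real.exp (-ε)) / (Real.exp ε - Real.exp (-ε))
            * (Real.exp ε * Real.log (Real.exp ε))
        + (1 - (1 - Real.exp (-ε)) / (Real.exp ε - Real.exp (-ε)))
            * (Real.exp (-ε) * Real.log (Real.exp (-ε)))
        = ε * ((Real.exp ε - 1) * (1 - Real.exp (-ε))) / (Real.exp ε - Real.exp (-ε))) := by
  set a : ℝ := Real.exp (-ε) with ha
  set b : ℝ := Real.exp ε with hb
  have ha0 : 0 < a := Real.exp_pos _
  have hb0 : 0 < b := Real.exp_pos _
  have hab : a * b = 1 := by rw [ha, hb, ← Real.exp_add]; simp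
  have hba : 0 < b - a := by
    have : a < b := by
      rw [ha, hb]; exact Real.exp_lt_exp.mpr (by linarith)
    linarith
  have hla : Real.log a = -ε := Real.log_exp _
  have hlb : Real.log b = ε := Real.log_exp _
  -- affine upper bound coefficients
  set c1 : ℝ := (b * ε - a * (-ε)) / (b - a) with hc1
  set c0 : ℝ := b * ε - c1 * b with hc0
  -- pointwise chord bound
  have key : ∀ z : ℝ, a ≤ z → z ≤ b → z * Real.log z ≤ c0 + c1 * z := by
    intro z h1 h2
    set t : ℝ := (b - z) / (b - a) with ht
    have ht0 : 0 ≤ t := div_nonneg (by linarith) (by linarith)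
    have ht1 : 0 ≤ 1 - t := by
      have : t ≤ 1 := by rw [ht, div_le_one hba]; linarith
      linarith
    have hsum : t + (1 - t) = 1 := by ring
    have hz : t • a + (1 - t) • b = z := by
      field_simp [ht]
      have htm : t * (b - a) = b - z := by rw [ht]; exact div_mul_cancel₀ _ hba.ne'
      linear_combination -htm
    have := Real.convexOn_mul_log.2 (Set.mem_Ici.mpr ha0.le) (Set.mem_Ici.mpr hb0.le)
      ht0 ht1 hsum
    rw [hz] at this
    simp only [smul_eq_mul] at this
    calc z * Real.log z ≤ t * (a * Real.log a) + (1 - t) * (b * Real.log b) := this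
      _ = c0 + c1 * z := by
          rw [hla, hlb, ht, hc0, hc1]; field_simp; ring
  -- integrability
  have hZm : AEStronglyMeasurable Z μ := hZ.aestronglyMeasurable
  have hZint : Integrable Z μ := ⟨hZm, HasFiniteIntegral.of_bounded (C := b) <| by
    filter_upwards [hrange] with x ⟨h1, h2⟩
    rw [Real.norm_eq_abs, abs_le]; constructor <;> nlinarith⟩
  have hZLm : AEStronglyMeasurable (fun x => Z x * Real.log (Z x)) μ :=
    (hZ.mul (Real.measurable_log.comp hZ)).aestronglyMeasurable
  have hZLint : Integrable (fun x => Z x * Real.log (Z x)) μ :=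
    ⟨hZLm, HasFiniteIntegral.of_bounded (C := b * ε) <| by
      filter_upwards [hrange] with x ⟨h1, h2⟩
      have hz0 : 0 < Z x := lt_of_lt_of_le ha0 h1
      have hl1 : Real.log (Z x) ≤ ε := by
        calc Real.log (Z x) ≤ Real.log b := Real.log_le_log hz0 h2
          _ = ε := hlb
      have hl2 : -ε ≤ Real.log (Z x) := by
        calc -ε = Real.log a := hla.symm
          _ ≤ Real.log (Z x) := Real.log_le_log ha0 h1
      rw [Real.norm_eq_abs, abs_mul, abs_of_pos hz0]
      have : |Real.log (Z x)| ≤ ε := abs_le.mpr ⟨hl2, hl1⟩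
      nlinarith⟩
  constructor
  · have hmono : ∫ x, Z x * Real.log (Z x) ∂μ ≤ ∫ x, c0 + c1 * Z x ∂μ := by
      refine integral_mono_ae hZLint ((integrable_const c0).add (hZint.const_mul c1)) ?_
      filter_upwards [hrange] with x ⟨h1, h2⟩
      exact key _ h1 h2
    have hrhs : ∫ x, c0 + c1 * Z x ∂μ = c0 + c1 := by
      rw [integral_add (integrable_const c0) (hZint.const_mul c1), integral_const,
        integral_const_mul, hmean]
      simp
    have : c0 + c1 = ε * ((b - 1) * (1 - a)) / (b - a) := by
      rw [hc0, hc1]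
      field_simp
      nlinarith [hab]
    linarith [hmono, hrhs ▸ hmono, this ▸ hrhs ▸ hmono]
  · rw [hla, hlb]
    field_simp
    nlinarith [hab]
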